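/- Let q = m/n ∈ ℚ ∩ (0,1/2) (in lowest terms) and let α ∈ KS with q(α) = q. If the first n+1 symbols of α form the word c_q, and d := σ^{n+1}(α), then d ⪯ 1σ²(α) in the unimodal order, where 1σ²(α) denotes the sequence whose 0th entry is 1 and whose (i+1)st entry is α_{i+2}. -/

import Mathlib

open Set

/-- Binary sequences. -/
abbrev Bseq := ℕ → Fin 2

/-- The strict unimodal order on binary sequences: `α ≺ β` iff at the least index `r` where
they differ, the sum `∑_{i=0}^r α_i` is even. -/
def umLT (α β : Bseq) : Prop :=
  ∃ r : ℕ, (∀ i, i < r → α i = β i) ∧ α r ≠ β r ∧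
    Even (∑ i ∈ Finset.range (r + 1), ((α i : ℕ)))

/-- `α ⪯ β` in the unimodal order. -/
def umLE (α β : Bseq) : Prop := umLT α β ∨ α = β

/-- The `r`-fold shift `σ^r`. -/
def shiftSeq (r : ℕ) (α : Bseq) : Bseq := fun i => α (i + r)

/-- A sequence is maximal if all its shifts are `⪯` it. -/
def MaximalSeq (α : Bseq) : Prop := ∀ r : ℕ, umLE (shiftSeq r α) α

/-- Membership in `KS`: maximal sequences whose first two symbols are `10`. -/
def KSseq (α : Bseq) : Prop := MaximalSeq α ∧ α 0 = 1 ∧ α 1 = 0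

/-- A (purely) periodic sequence. -/
def PeriodicSeq (α : Bseq) : Prop := ∃ p : ℕ, 0 < p ∧ ∀ i, α (i + p) = α i

/-- The periodic sequence `W^∞` determined by a finite word `W`. -/
def perSeq (W : List (Fin 2)) : Bseq := fun i => W.getD (i % W.length) 0

/-- The sequence `V W^∞`. -/
def preperSeq (V W : List (Fin 2)) : Bseq :=
  fun i => if i < V.length then V.getD i 0 else perSeq W (i - V.length)

/-- The sequence `10 1^∞`. -/
def seq101 : Bseq := fun i => if i = 1 then 0 else 1

/-- The sequence `1σ²(α)`: `1` followed by `α₂ α₃ ⋯`. -/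
def oneShift2 (α : Bseq) : Bseq := fun i => if i = 0 then 1 else α (i + 1)

/-- `κ_i(q)`: `κ_1(q) = ⌊1/q⌋ - 1`, and `κ_i(q) = ⌊i/q⌋ - ⌊(i-1)/q⌋ - 2` for `i ≥ 2`. -/
noncomputable def kap (q : ℝ) (i : ℕ) : ℕ :=
  if i = 1 then (⌊1 / q⌋ - 1).toNat
  else (⌊(i : ℝ) / q⌋ - ⌊((i : ℝ) - 1) / q⌋ - 2).toNat

/-- The word `1 0^{κ_j(q)} 11 0^{κ_{j+1}(q)} 11 ⋯ 11 0^{κ_{j+M}(q)}`: an initial block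
indexed `j` followed by `M` further blocks. -/
noncomputable def tailBody (q : ℝ) (j M : ℕ) : List (Fin 2) :=
  1 :: (List.replicate (kap q j) 0 ++
    (((List.range M).map fun t => 1 :: 1 :: List.replicate (kap q (j + 1 + t)) 0).flatten))

/-- The word `c_q = 1 0^{κ_1(q)} 11 0^{κ_2(q)} 11 ⋯ 11 0^{κ_m(q)} 1`. -/
noncomputable def cqWord (q : ℝ) (m : ℕ) : List (Fin 2) := tailBody q 1 (m - 1) ++ [1]

/-- The word `w_q`, obtained from `c_q` by deleting its last two symbols. -/
noncomputable def wqWord (q : ℝ) (m : ℕ) : List (Fin 2) := (cqWord q m).dropLast.dropLast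

/-- The word `ŵ_q`, the reverse of `w_q`. -/
noncomputable def hwqWord (q : ℝ) (m : ℕ) : List (Fin 2) := (wqWord q m).reverse

/-- The finite word `1 0^{κ_j(q)} 11 0^{κ_{j+1}(q)} ⋯ 11 0^{κ_m(q)} 1`. -/
noncomputable def tailWord (q : ℝ) (j m : ℕ) : List (Fin 2) := tailBody q j (m - j) ++ [1]

/-- The word `1 0^{κ_1(q)-1} 11 0^{κ_2(q)} 11 ⋯` with `M` blocks after the first
(no closing `1`). -/
noncomputable def lowBody (q : ℝ) (M : ℕ) : List (Fin 2) :=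
  1 :: (List.replicate (kap q 1 - 1) 0 ++
    (((List.range M).map fun t => 1 :: 1 :: List.replicate (kap q (2 + t)) 0).flatten))

/-- The finite word `1 0^{κ_1(q)-1} 11 0^{κ_2(q)} ⋯ 11 0^{κ_m(q)} 1`. -/
noncomputable def lowWord (q : ℝ) (m : ℕ) : List (Fin 2) := lowBody q (m - 1) ++ [1]

/-- The infinite sequence `1 0^{κ_j(q)} 11 0^{κ_{j+1}(q)} 11 0^{κ_{j+2}(q)} 11 ⋯`. -/
noncomputable def tailSeq (q : ℝ) (j : ℕ) : Bseq := fun i => (tailBody q j (i + 1)).getD i 0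

/-- The infinite sequence `1 0^{κ_1(q)-1} 11 0^{κ_2(q)} 11 0^{κ_3(q)} 11 ⋯`. -/
noncomputable def lowSeq (q : ℝ) : Bseq := fun i => (lowBody q (i + 1)).getD i 0

/-- The height `q(α) = inf({q ∈ (0,1/2] ∩ ℚ : (c_q0)^∞ ≺ α} ∪ {1/2})`. -/
noncomputable def height (α : Bseq) : ℝ :=
  sInf ({x : ℝ | ∃ q : ℚ, x = (q : ℝ) ∧ 0 < q ∧ q ≤ 1 / 2 ∧
    umLT (perSeq (cqWord (q : ℝ) q.num.toNat ++ [0])) α} ∪ {1 / 2})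

/-- A unimodal map `f : [a,b] → [a,b]` with turning point `c`. -/
structure Unimodal (a b c : ℝ) (f : ℝ → ℝ) : Prop where
  a_lt_b : a < b
  c_mem : c ∈ Ioo a b
  cont : ContinuousOn f (Icc a b)
  maps : MapsTo f (Icc a b) (Icc a b)
  mono : StrictMonoOn f (Icc a c)
  anti : StrictAntiOn f (Icc c b)
  map_c : f c = b
  map_b : f b = a

/-- `α` is an itinerary of `x` under the unimodal map `f` with turning point `c`. -/
def IsItin (f : ℝ → ℝ) (a b c x : ℝ) (α : Bseq) : Prop :=
  ∀ r : ℕ, (α r = 0 → f^[r] x ∈ Icc a c) ∧ (α r = 1 → f^[r] x ∈ Icc c b)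

/-- `κ` is the kneading sequence of `f`: the itinerary of `b` smallest in the unimodal order. -/
def IsKneading (f : ℝ → ℝ) (a b c : ℝ) (κ : Bseq) : Prop :=
  IsItin f a b c b κ ∧ ∀ β : Bseq, IsItin f a b c b β → umLE κ β

/-- The standing convention on unimodal maps. -/
structure Convention (f : ℝ → ℝ) (a b c : ℝ) (κ : Bseq) : Prop where
  kneading : IsKneading f a b c κ
  gt101 : umLT seq101 κ
  itin_inj : ¬ PeriodicSeq κ → ∀ x ∈ Icc a b, ∀ y ∈ Icc a b, ∀ α : Bseq,
      IsItin f a b c x α → IsItin f a b c y α → x = y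
  two_fixed : ∀ n : ℕ, 0 < n → ∀ μ : Bseq,
      {x | x ∈ Icc a b ∧ f^[n] x = x ∧ IsItin f a b c x μ}.encard ≤ 2 ∧
      ∀ x ∈ {x | x ∈ Icc a b ∧ f^[n] x = x ∧ IsItin f a b c x μ},
        ∀ y ∈ {x | x ∈ Icc a b ∧ f^[n] x = x ∧ IsItin f a b c x μ},
          x ≠ y → ∃ r : ℕ, κ = shiftSeq r μ

namespace S16

def chunk (κ : ℕ → ℕ) (i : ℕ) : List (Fin 2) := 1 :: 1 :: List.replicate (κ i) 0

def chunks (κ : ℕ → ℕ) (j M : ℕ) : List (Fin 2) :=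
  ((List.range M).map fun t => chunk κ (j + 1 + t)).flatten

def gBody (κ : ℕ → ℕ) (j M : ℕ) : List (Fin 2) :=
  1 :: (List.replicate (κ j) 0 ++ chunks κ j M)

lemma tailBody_eq (q : ℝ) (j M : ℕ) : tailBody q j M = gBody (kap q) j M := rfl

lemma chunks_zero (κ : ℕ → ℕ) (j : ℕ) : chunks κ j 0 = [] := rfl

lemma chunks_succ (κ : ℕ → ℕ) (j M : ℕ) :
    chunks κ j (M + 1) = chunks κ j M ++ chunk κ (j + 1 + M) := by
  simp [chunks, List.range_succ]

lemma chunks_add (κ : ℕ → ℕ) (j A B : ℕ) :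
    chunks κ j (A + B) = chunks κ j A ++ chunks κ (j + A) B := by
  induction B with
  | zero => simp [chunks_zero]
  | succ B ih =>
      rw [show A + (B+1) = (A+B)+1 from rfl, chunks_succ, ih, chunks_succ,
        List.append_assoc]
      congr 3
      omega

lemma chunk_length (κ : ℕ → ℕ) (i : ℕ) : (chunk κ i).length = 2 + κ i := by
  simp [chunk]; omega

lemma chunks_length (κ : ℕ → ℕ) (j M : ℕ) :
    (chunks κ j M).length = ∑ t ∈ Finset.range M, (2 + κ (j + 1 + t)) := by
  induction M with
  | zero => simp [chunks_zero]
  | succ M ih => rw [chunks_succ, List.length_append, ih, Finset.sum_range_succ, chunk_length]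

lemma chunks_length_ge (κ : ℕ → ℕ) (j M : ℕ) : 2 * M ≤ (chunks κ j M).length := by
  rw [chunks_length]
  calc 2*M = ∑ t ∈ Finset.range M, 2 := by simp [mul_comm]
  _ ≤ _ := Finset.sum_le_sum (fun i _ => by omega)

lemma gBody_length (κ : ℕ → ℕ) (j M : ℕ) :
    (gBody κ j M).length = 1 + κ j + (chunks κ j M).length := by
  simp [gBody]; omega

lemma gBody_length_ge (κ : ℕ → ℕ) (j M : ℕ) : 1 + 2 * M ≤ (gBody κ j M).length := by
  have := chunks_length_ge κ j M
  rw [gBody_length]; omega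

lemma gBody_append (κ : ℕ → ℕ) (j A B : ℕ) :
    gBody κ j (A + B) = gBody κ j A ++ chunks κ (j + A) B := by
  simp [gBody, chunks_add, List.append_assoc]

lemma gBody_prefix (κ : ℕ → ℕ) (j : ℕ) {A B : ℕ} (h : A ≤ B) :
    gBody κ j A <+: gBody κ j B := by
  refine ⟨chunks κ (j + A) (B - A), ?_⟩
  rw [← gBody_append]
  congr 1
  omega

lemma chunks_congr {κ κ' : ℕ → ℕ} (j M : ℕ) (h : ∀ i, j + 1 ≤ i → i ≤ j + M → κ i = κ' i) :
    chunks κ j M = chunks κ' j M := by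
  unfold chunks
  congr 1
  refine List.map_congr_left (fun t ht => ?_)
  rw [List.mem_range] at ht
  unfold chunk
  rw [h (j+1+t) (by omega) (by omega)]

lemma gBody_congr {κ κ' : ℕ → ℕ} (j M : ℕ) (h : ∀ i, j ≤ i → i ≤ j + M → κ i = κ' i) :
    gBody κ j M = gBody κ' j M := by
  unfold gBody
  rw [h j le_rfl (by omega), chunks_congr j M (fun i h1 h2 => h i (by omega) h2)]

lemma getD_prefix {l l' : List (Fin 2)} (h : l <+: l') {i : ℕ} (hi : i < l.length) :
    l'.getD i 0 = l.getD i 0 := by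
  obtain ⟨t, rfl⟩ := h
  exact List.getD_append _ _ _ _ hi


-- sum of values
def vsum (l : List (Fin 2)) : ℕ := (l.map Fin.val).sum

lemma sum_getD (l : List (Fin 2)) :
    ∑ i ∈ Finset.range l.length, ((l.getD i 0 : ℕ)) = vsum l := by
  induction l with
  | nil => simp [vsum]
  | cons a l ih =>
      rw [List.length_cons, Finset.sum_range_succ']
      simp only [List.getD_cons_succ, List.getD_cons_zero]
      rw [ih]
      simp [vsum]; omega

lemma vsum_append (l l' : List (Fin 2)) : vsum (l ++ l') = vsum l + vsum l' := by
  simp [vsum]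

lemma vsum_chunk (κ : ℕ → ℕ) (i : ℕ) : vsum (chunk κ i) = 2 := by
  simp [vsum, chunk, List.map_replicate, List.sum_replicate]

lemma vsum_chunks (κ : ℕ → ℕ) (j M : ℕ) : vsum (chunks κ j M) = 2 * M := by
  induction M with
  | zero => simp [chunks, vsum]
  | succ M ih => rw [chunks_succ, vsum_append, ih, vsum_chunk]; omega

lemma vsum_gBody (κ : ℕ → ℕ) (j M : ℕ) : vsum (gBody κ j M) = 1 + 2 * M := by
  simp [gBody, vsum_append, vsum, List.map_replicate, List.sum_replicate, vsum_chunks]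
  have : (List.map Fin.val (chunks κ j M)).sum = vsum (chunks κ j M) := rfl
  rw [this, vsum_chunks]

-- floors
lemma floor_nat_div (x y : ℕ) : ⌊(x : ℝ) / (y : ℝ)⌋ = ((x / y : ℕ) : ℤ) := by
  have : ((x : ℝ) / (y : ℝ)) = (((x : ℚ) / (y : ℚ) : ℚ) : ℝ) := by push_cast; ring
  rw [this, Rat.floor_cast]
  have : ((x : ℚ) / (y : ℚ)) = (((x : ℤ) : ℚ) / ((y : ℕ) : ℚ)) := by push_cast; ring
  rw [this, Rat.floor_intCast_div_natCast]
  omega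


lemma kap_one (m n : ℕ) : kap ((m : ℝ) / n) 1 = n / m - 1 := by
  unfold kap
  rw [if_pos rfl, one_div_div, floor_nat_div]
  omega

lemma kap_ge2 (m n i : ℕ) (hi : 2 ≤ i) :
    kap ((m : ℝ) / n) i = (i * n) / m - ((i - 1) * n) / m - 2 := by
  unfold kap
  rw [if_neg (by omega)]
  have h1 : (i : ℝ) / ((m : ℝ) / n) = ((i * n : ℕ) : ℝ) / ((m : ℕ) : ℝ) := by
    rw [div_div_eq_mul_div]; push_cast; ring
  have h2 : ((i : ℝ) - 1) / ((m : ℝ) / n) = (((i - 1) * n : ℕ) : ℝ) / ((m : ℕ) : ℝ) := by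
    rw [div_div_eq_mul_div]
    congr 1
    push_cast [Nat.cast_sub (by omega : 1 ≤ i)]
    ring
  rw [h1, h2, floor_nat_div, floor_nat_div]
  omega

lemma nm_div_ge (m n : ℕ) (hm : 0 < m) (hmn : 2 * m ≤ n) : 2 ≤ n / m :=
  (Nat.le_div_iff_mul_le hm).2 (by omega)

lemma fdiff (m n i : ℕ) (hm : 0 < m) (hmn : 2 * m ≤ n) :
    (i * n) / m + 2 ≤ ((i + 1) * n) / m := by
  have h1 := nm_div_ge m n hm hmn
  have h3 : (i + 1) * n = i * n + n := by ring
  rw [h3]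
  have h2 := Nat.add_div_le_add_div (i * n) n m
  omega

lemma kap_diff (m n i : ℕ) (hm : 0 < m) (hmn : 2 * m ≤ n) (hi : 2 ≤ i) :
    2 + kap ((m : ℝ) / n) i = (i * n) / m - ((i - 1) * n) / m ∧
    ((i - 1) * n) / m + 2 ≤ (i * n) / m := by
  have h := fdiff m n (i - 1) hm hmn
  rw [show i - 1 + 1 = i by omega] at h
  rw [kap_ge2 m n i hi]
  omega

lemma f_shift (m n i : ℕ) (hm : 0 < m) : ((i + m) * n) / m = (i * n) / m + n := by
  have : (i + m) * n = i * n + m * n := by ring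
  rw [this, Nat.add_mul_div_left _ _ hm]

lemma kap_per (m n i : ℕ) (hm : 0 < m) (hi : 2 ≤ i) :
    kap ((m : ℝ) / n) (i + m) = kap ((m : ℝ) / n) i := by
  rw [kap_ge2 m n (i + m) (by omega), kap_ge2 m n i hi,
    show i + m - 1 = (i - 1) + m by omega, f_shift m n i hm, f_shift m n (i - 1) hm]
  omega

lemma kap_m1 (m n : ℕ) (hm : 0 < m) (hmn : 2 * m ≤ n) :
    kap ((m : ℝ) / n) (m + 1) = kap ((m : ℝ) / n) 1 - 1 := by
  have h1 := nm_div_ge m n hm hmn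
  rw [kap_ge2 m n (m + 1) (by omega), kap_one m n,
    show m + 1 - 1 = m by omega,
    show (m + 1) * n = n + m * n by ring,
    Nat.add_mul_div_left _ _ hm, Nat.mul_div_cancel_left n hm]
  omega

lemma div_shift (M m n i : ℕ) (hm : 0 < m) (hM : 0 < M) (h1 : 1 ≤ i) (h2 : i ≤ M - 1) :
    (i * (M * n + 1)) / (M * m) = (i * n) / m := by
  set a := (i * n) / m with ha
  set b := (i * n) % m with hb
  have hab : i * n = m * a + b := (Nat.div_add_mod (i * n) m).symm ▸ by omega
  have hbm : b < m := Nat.mod_lt _ hm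
  have key : i * (M * n + 1) = a * (M * m) + (M * b + i) := by
    have : i * (M * n + 1) = M * (i * n) + i := by ring
    rw [this, hab]; ring
  have hlt : M * b + i < M * m := by
    have e1 : M * (b + 1) = M * b + M := by ring
    have e2 : M * (b + 1) ≤ M * m := Nat.mul_le_mul_left M (by omega)
    omega
  rw [key, show a * (M * m) + (M * b + i) = (M * b + i) + a * (M * m) by ring,
    Nat.add_mul_div_right _ _ (by positivity : 0 < M * m), Nat.div_eq_of_lt hlt]
  omega

lemma kap_agree (M m n : ℕ) (hm : 0 < m) (hM : 2 ≤ M) (j : ℕ)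
    (hj1 : 1 ≤ j) (hj2 : j ≤ M - 1) :
    kap (((M * m : ℕ) : ℝ) / ((M * n + 1 : ℕ) : ℝ)) j = kap ((m : ℝ) / n) j := by
  have hMm : 0 < M * m := by positivity
  rcases eq_or_lt_of_le hj1 with h | h
  · have h2 := div_shift M m n 1 hm (by omega) le_rfl (by omega)
    rw [one_mul, one_mul] at h2
    rw [← h, kap_one, kap_one, h2]
  · rw [kap_ge2 _ _ j (by omega), kap_ge2 _ _ j (by omega),
      div_shift M m n j hm (by omega) (by omega) hj2,
      div_shift M m n (j - 1) hm (by omega) (by omega) (by omega)]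

-- NOW the structural lemmas
lemma tailSeq_eval (q : ℝ) {i M : ℕ} (h : i < (gBody (kap q) 1 M).length) :
    tailSeq q 1 i = (gBody (kap q) 1 M).getD i 0 := by
  have h0 : i < (gBody (kap q) 1 (i + 1)).length := by
    have := gBody_length_ge (kap q) 1 (i + 1); omega
  show (tailBody q 1 (i + 1)).getD i 0 = _
  rw [tailBody_eq]
  rcases le_total (i + 1) M with hM | hM
  · exact (getD_prefix (gBody_prefix _ _ hM) h0).symm
  · exact getD_prefix (gBody_prefix _ _ hM) h

lemma chunks_one (κ : ℕ → ℕ) (j : ℕ) : chunks κ j 1 = chunk κ (j + 1) := by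
  rw [show (1 : ℕ) = 0 + 1 from rfl, chunks_succ, chunks_zero]
  simp

lemma gBody_len_q (m n : ℕ) (hm : 0 < m) (hmn : 2 * m + 1 ≤ n) (M : ℕ) :
    (gBody (kap ((m : ℝ) / n)) 1 M).length = ((M + 1) * n) / m := by
  induction M with
  | zero =>
      rw [gBody_length, kap_one, chunks_zero]
      have := nm_div_ge m n hm (by omega)
      simp only [List.length_nil]
      rw [show (0 + 1) * n = n by ring]
      omega
  | succ M ih =>
      rw [show M + 1 = M + 1 from rfl, gBody_append, List.length_append, ih, chunks_one,
        chunk_length]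
      have hd := kap_diff m n (M + 2) hm (by omega) (by omega)
      rw [show 1 + M + 1 = M + 2 by omega, show (M + 1 + 1) * n = (M + 2) * n by ring]
      rw [show M + 2 - 1 = M + 1 by omega] at hd
      omega

lemma body_len (m n : ℕ) (hm : 0 < m) (hmn : 2 * m + 1 ≤ n) :
    (gBody (kap ((m : ℝ) / n)) 1 (m - 1)).length = n := by
  rw [gBody_len_q m n hm hmn, show m - 1 + 1 = m by omega, Nat.mul_div_cancel_left n hm]

lemma body_decomp (m n : ℕ) (hm : 0 < m) :
    gBody (kap ((m : ℝ) / n)) 1 m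
      = gBody (kap ((m : ℝ) / n)) 1 (m - 1) ++ chunk (kap ((m : ℝ) / n)) (m + 1) := by
  rw [show m = (m - 1) + 1 by omega, gBody_append, chunks_one,
    show 1 + (m - 1) + 1 = m - 1 + 1 + 1 by omega]
  congr 2 <;> omega

lemma glenm_ge (m n : ℕ) (hm : 0 < m) (hmn : 2 * m + 1 ≤ n) :
    n + 2 ≤ (gBody (kap ((m : ℝ) / n)) 1 m).length := by
  rw [gBody_len_q m n hm hmn]
  have := fdiff m n m hm (by omega)
  rw [Nat.mul_div_cancel_left n hm] at this
  omega

lemma T_n (m n : ℕ) (hm : 0 < m) (hmn : 2 * m + 1 ≤ n) :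
    tailSeq ((m : ℝ) / n) 1 n = 1 := by
  have hblen := body_len m n hm hmn
  rw [tailSeq_eval ((m : ℝ) / n) (show n < (gBody (kap ((m : ℝ) / n)) 1 m).length by
      have := glenm_ge m n hm hmn; omega), body_decomp m n hm,
    List.getD_append_right _ _ _ _ (by omega), hblen, Nat.sub_self]
  rfl

lemma T_n1 (m n : ℕ) (hm : 0 < m) (hmn : 2 * m + 1 ≤ n) :
    tailSeq ((m : ℝ) / n) 1 (n + 1) = 1 := by
  have hblen := body_len m n hm hmn
  rw [tailSeq_eval ((m : ℝ) / n) (show n + 1 < (gBody (kap ((m : ℝ) / n)) 1 m).length by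
      have := glenm_ge m n hm hmn; omega), body_decomp m n hm,
    List.getD_append_right _ _ _ _ (by omega), hblen, show n + 1 - n = 1 by omega]
  rfl
lemma T_cq (m n : ℕ) (hm : 0 < m) (hmn : 2 * m + 1 ≤ n) :
    ∀ i, i ≤ n → tailSeq ((m : ℝ) / n) 1 i = (cqWord ((m : ℝ) / n) m).getD i 0 := by
  intro i hi
  have hblen := body_len m n hm hmn
  rw [cqWord, tailBody_eq]
  rcases lt_or_eq_of_le hi with h | h
  · rw [List.getD_append _ _ _ _ (by omega),
      tailSeq_eval (M := m - 1) ((m : ℝ) / n) (by omega)]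
  · rw [h, List.getD_append_right _ _ _ _ (by omega), hblen, Nat.sub_self]
    exact T_n m n hm hmn


lemma chunks_shift (m n M : ℕ) (hm : 0 < m) :
    chunks (kap ((m : ℝ) / n)) (m + 1) M = chunks (kap ((m : ℝ) / n)) 1 M := by
  unfold chunks
  congr 1
  refine List.map_congr_left (fun t ht => ?_)
  unfold chunk
  rw [show m + 1 + 1 + t = (2 + t) + m by omega, kap_per m n (2 + t) hm (by omega),
    show 1 + 1 + t = 2 + t by omega]

lemma T_per (m n : ℕ) (hm : 0 < m) (hmn : 2 * m + 1 ≤ n) :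
    ∀ p, 2 ≤ p → tailSeq ((m : ℝ) / n) 1 (p + n) = tailSeq ((m : ℝ) / n) 1 p := by
  intro p hp
  have hκ1 : 2 ≤ n / m := nm_div_ge m n hm (by omega)
  have hk1 : kap ((m : ℝ) / n) 1 = n / m - 1 := kap_one m n
  set M := p + n with hM
  set rep' : List (Fin 2) := List.replicate (kap ((m : ℝ) / n) 1 - 1) 0 with hrep'
  have hbl := body_len m n hm hmn
  have hc : chunk (kap ((m : ℝ) / n)) (m + 1) = [1, 1] ++ rep' := by
    unfold chunk
    rw [kap_m1 m n hm (by omega)]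
    rfl
  have hW : gBody (kap ((m : ℝ) / n)) 1 (m + M)
      = (gBody (kap ((m : ℝ) / n)) 1 (m - 1) ++ [1, 1])
        ++ (rep' ++ chunks (kap ((m : ℝ) / n)) 1 M) := by
    rw [show m + M = (m - 1) + (1 + M) by omega, gBody_append,
      show 1 + (m - 1) = m by omega, chunks_add, chunks_one, chunks_shift m n M hm, hc]
    simp [List.append_assoc]
  have hlenW : p + n < (gBody (kap ((m : ℝ) / n)) 1 (m + M)).length := by
    have := gBody_length_ge (kap ((m : ℝ) / n)) 1 (m + M); omega
  have harg : p + n - (gBody (kap ((m : ℝ) / n)) 1 (m - 1) ++ [1, 1]).length = p - 2 := by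
    rw [List.length_append, hbl]
    simp
    omega
  have h1 : tailSeq ((m : ℝ) / n) 1 (p + n)
      = (rep' ++ chunks (kap ((m : ℝ) / n)) 1 M).getD (p - 2) 0 := by
    rw [tailSeq_eval _ hlenW, hW,
      List.getD_append_right _ _ _ _ (by rw [List.length_append, hbl]; simp; omega), harg]
  have hV : gBody (kap ((m : ℝ) / n)) 1 M
      = [1, 0] ++ (rep' ++ chunks (kap ((m : ℝ) / n)) 1 M) := by
    unfold gBody
    rw [show kap ((m : ℝ) / n) 1 = (kap ((m : ℝ) / n) 1 - 1) + 1 by omega,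
      List.replicate_succ]
    rfl
  have hlenV : p < (gBody (kap ((m : ℝ) / n)) 1 M).length := by
    have := gBody_length_ge (kap ((m : ℝ) / n)) 1 M; omega
  have h2 : tailSeq ((m : ℝ) / n) 1 p
      = (rep' ++ chunks (kap ((m : ℝ) / n)) 1 M).getD (p - 2) 0 := by
    rw [tailSeq_eval _ hlenV, hV, List.getD_append_right _ _ _ _ (by simp; omega)]
    norm_num
  rw [h1, h2]

lemma T_sum (m n : ℕ) (hm : 0 < m) (hmn : 2 * m + 1 ≤ n) :
    ∑ i ∈ Finset.range (n + 1), ((tailSeq ((m : ℝ) / n) 1 i : ℕ)) = 2 * m := by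
  have hbl := body_len m n hm hmn
  rw [Finset.sum_range_succ, T_n m n hm hmn]
  have h1 : ∀ i ∈ Finset.range n, ((tailSeq ((m : ℝ) / n) 1 i : ℕ))
      = (((gBody (kap ((m : ℝ) / n)) 1 (m - 1)).getD i 0 : ℕ)) := by
    intro i hi; rw [Finset.mem_range] at hi
    rw [tailSeq_eval (M := m - 1) _ (by omega)]
  rw [Finset.sum_congr rfl h1]
  have h2 := sum_getD (gBody (kap ((m : ℝ) / n)) 1 (m - 1))
  rw [hbl] at h2
  rw [h2, vsum_gBody]
  have h3 : ((1 : Fin 2) : ℕ) = 1 := rfl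
  omega


end S16

open S16

/-- If `α ∈ KS` has height `q = m/n ∈ (0,1/2)` and begins with the word `c_q`
(of length `n+1`), then `σ^{n+1}(α) ⪯ 1σ²(α)` in the unimodal order. -/
theorem stmt16 (m n : ℕ) (hm : 0 < m) (hn : 0 < n) (hcop : Nat.Coprime m n)
    (hq : (m : ℝ) / n < 1 / 2) (α : Bseq) (hα : KSseq α)
    (hheight : height α = (m : ℝ) / n)
    (hpre : ∀ i, i < n + 1 → α i = (cqWord ((m : ℝ) / n) m).getD i 0) :
    umLE (shiftSeq (n + 1) α) (oneShift2 α) := by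
  classical
  have hmn : 2 * m + 1 ≤ n := by
    rw [div_lt_div_iff₀ (by exact_mod_cast hn) (by norm_num)] at hq
    have h2 : ((2 * m : ℕ) : ℝ) < ((n : ℕ) : ℝ) := by push_cast; linarith
    have := Nat.cast_lt (α := ℝ) |>.mp h2
    omega
  by_cases hdb : shiftSeq (n + 1) α = oneShift2 α
  · exact Or.inr hdb
  have hex : ∃ i, shiftSeq (n + 1) α i ≠ oneShift2 α i := by
    by_contra hc
    push_neg at hc
    exact hdb (funext hc)
  set r := Nat.find hex with hrdef
  have hrne : shiftSeq (n + 1) α r ≠ oneShift2 α r := Nat.find_spec hex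
  have hagr : ∀ i, i < r → shiftSeq (n + 1) α i = oneShift2 α i := by
    intro i hi
    have := Nat.find_min hex hi
    simpa using this
  rcases Nat.even_or_odd (∑ i ∈ Finset.range (r + 1), ((shiftSeq (n + 1) α i : ℕ))) with hev | hod
  · exact Or.inl ⟨r, hagr, hrne, hev⟩
  exfalso
  have hsum_lt : ∑ i ∈ Finset.range r, ((shiftSeq (n + 1) α i : ℕ))
      = ∑ i ∈ Finset.range r, ((oneShift2 α i : ℕ)) :=
    Finset.sum_congr rfl (fun i hi => by rw [hagr i (Finset.mem_range.1 hi)])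
  have hvals : ((shiftSeq (n + 1) α r : ℕ)) + ((oneShift2 α r : ℕ)) = 1 := by
    have h1 : (shiftSeq (n + 1) α r).val < 2 := (shiftSeq (n + 1) α r).isLt
    have h2 : (oneShift2 α r).val < 2 := (oneShift2 α r).isLt
    have h3 : (shiftSeq (n + 1) α r).val ≠ (oneShift2 α r).val := fun h => hrne (Fin.ext h)
    omega
  have hEβ : Even (∑ i ∈ Finset.range (r + 1), ((oneShift2 α i : ℕ))) := by
    rw [Finset.sum_range_succ] at hod ⊢
    rw [Nat.odd_iff] at hod
    rw [Nat.even_iff]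
    omega
  have hβ0 : oneShift2 α 0 = 1 := rfl
  have hr1 : 1 ≤ r := by
    by_contra h
    have h0 : r = 0 := by omega
    rw [h0, Finset.sum_range_one, hβ0] at hEβ
    simp at hEβ
  -- key: β agrees with the tail sequence
  have hE : ∀ i, i ≤ r → oneShift2 α i = tailSeq ((m : ℝ) / n) 1 (n + 1 + i) := by
    intro i
    induction i using Nat.strong_induction_on with
    | _ i ih =>
      intro hir
      rcases Nat.eq_zero_or_pos i with h0 | h1
      · rw [h0, hβ0, show n + 1 + 0 = n + 1 from rfl]
        exact (T_n1 m n hm hmn).symm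
      rcases lt_or_ge i n with hlt2 | hge
      · have h2 : oneShift2 α i = α (i + 1) := if_neg (by omega)
        rw [h2, hpre (i + 1) (by omega), ← T_cq m n hm hmn (i + 1) (by omega),
          show n + 1 + i = (i + 1) + n by omega, T_per m n hm hmn (i + 1) (by omega)]
      rcases eq_or_lt_of_le hge with he | hgt
      · have h2 : oneShift2 α i = α (i + 1) := if_neg (by omega)
        have h3 : α (i + 1) = shiftSeq (n + 1) α 0 := by
          show α (i + 1) = α (0 + (n + 1))
          congr 1
          omega
        rw [h2, h3, hagr 0 (by omega), hβ0,
          show n + 1 + i = (n + 1) + n by omega, T_per m n hm hmn (n + 1) (by omega)]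
        exact (T_n1 m n hm hmn).symm
      · have h2 : oneShift2 α i = α (i + 1) := if_neg (by omega)
        have h3 : α (i + 1) = shiftSeq (n + 1) α (i - n) := by
          show α (i + 1) = α ((i - n) + (n + 1))
          congr 1
          omega
        have e1 : tailSeq ((m : ℝ) / n) 1 (n + 1 + (i - n)) = tailSeq ((m : ℝ) / n) 1 (i - n + 1) := by
          rw [show n + 1 + (i - n) = (i - n + 1) + n by omega]
          exact T_per m n hm hmn _ (by omega)
        have e2 : tailSeq ((m : ℝ) / n) 1 (n + 1 + i) = tailSeq ((m : ℝ) / n) 1 (i - n + 1) := by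
          rw [show n + 1 + i = ((i - n + 1) + n) + n by omega, T_per m n hm hmn _ (by omega),
            T_per m n hm hmn _ (by omega)]
        rw [h2, h3, hagr (i - n) (by omega), ih (i - n) (by omega) (by omega), e1, e2]
  -- α agrees with the tail sequence up to n + r
  have hαT : ∀ i, i ≤ n + r → α i = tailSeq ((m : ℝ) / n) 1 i := by
    intro i hi
    rcases le_or_gt i n with h | h
    · rw [hpre i (by omega), ← T_cq m n hm hmn i h]
    · have h3 : α i = shiftSeq (n + 1) α (i - n - 1) := by
        show α i = α ((i - n - 1) + (n + 1))
        congr 1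
        omega
      rw [h3, hagr (i - n - 1) (by omega), hE (i - n - 1) (by omega),
        show n + 1 + (i - n - 1) = i by omega]
  have hdr : shiftSeq (n + 1) α r = α (n + 1 + r) := by
    show α (r + (n + 1)) = α (n + 1 + r)
    congr 1
    omega
  have hR : α (n + 1 + r) ≠ tailSeq ((m : ℝ) / n) 1 (n + 1 + r) := by
    intro hcon
    exact hrne (by rw [hdr, hcon, ← hE r le_rfl])
  -- parity of tail sums
  have hsplitT : ∑ i ∈ Finset.range (n + 1 + r + 1), ((tailSeq ((m : ℝ) / n) 1 i : ℕ))
      = 2 * m + ∑ j ∈ Finset.range (r + 1), ((oneShift2 α j : ℕ)) := by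
    rw [show n + 1 + r + 1 = (n + 1) + (r + 1) by omega, Finset.sum_range_add,
      T_sum m n hm hmn]
    congr 1
    refine Finset.sum_congr rfl (fun j hj => ?_)
    rw [Finset.mem_range] at hj
    rw [← hE j (by omega)]
  have hTeven : Even (∑ i ∈ Finset.range (n + 1 + r + 1), ((tailSeq ((m : ℝ) / n) 1 i : ℕ))) := by
    rw [hsplitT]
    rcases hEβ with ⟨k, hk⟩
    exact ⟨m + k, by omega⟩
  -- construct q'
  set R := n + 1 + r with hRdef
  set M := m * (R + 4) with hMdef
  have hM4 : R + 4 ≤ M := Nat.le_mul_of_pos_left _ hm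
  have hgd : Nat.gcd (M * m) (M * n + 1) ∣ m := by
    have h1 : Nat.gcd (M * m) (M * n + 1) ∣ n * (M * m) :=
      Dvd.dvd.mul_left (Nat.gcd_dvd_left _ _) n
    have h2 : Nat.gcd (M * m) (M * n + 1) ∣ m * (M * n + 1) :=
      Dvd.dvd.mul_left (Nat.gcd_dvd_right _ _) m
    have e : m * (M * n + 1) = n * (M * m) + m := by ring
    rw [e] at h2
    exact (Nat.dvd_add_right h1).mp h2
  have hg1 : Nat.gcd (M * m) (M * n + 1) = 1 := by
    have hgM : Nat.gcd (M * m) (M * n + 1) ∣ M * n :=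
      Dvd.dvd.mul_right (hgd.trans ⟨R + 4, rfl⟩) n
    exact Nat.dvd_one.mp ((Nat.dvd_add_right hgM).mp (Nat.gcd_dvd_right _ _))
  set q' : ℚ := (((M * m : ℕ) : ℤ) : ℚ) / (((M * n + 1 : ℕ) : ℤ) : ℚ) with hq'def
  have hnum : q'.num = ((M * m : ℕ) : ℤ) := by
    rw [hq'def]
    exact Rat.num_div_eq_of_coprime (by positivity) (by
      have h := hg1
      rw [← Int.natAbs_natCast (M * m), ← Int.natAbs_natCast (M * n + 1)] at h
      push_cast at h
      exact h)
  have hnumnat : q'.num.toNat = M * m := by rw [hnum]; omega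
  have hqr' : ((q' : ℚ) : ℝ) = ((M * m : ℕ) : ℝ) / ((M * n + 1 : ℕ) : ℝ) := by
    rw [hq'def]
    push_cast
    ring
  have hq'pos : 0 < q' := by
    rw [hq'def]
    positivity
  have hq'half : q' ≤ 1 / 2 := by
    rw [hq'def, div_le_div_iff₀ (by positivity) (by norm_num)]
    have e : M * (2 * m + 1) = 2 * (M * m) + M := by ring
    have h1 : M * (2 * m + 1) ≤ M * n := Nat.mul_le_mul_left M hmn
    have h2 : (2 * (M * m) : ℕ) ≤ M * n + 1 := by omega
    push_cast
    exact_mod_cast by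
      have : ((2 * (M * m) : ℕ) : ℚ) ≤ ((M * n + 1 : ℕ) : ℚ) := Nat.cast_le.mpr h2
      push_cast at this
      linarith
  have hq'lt : ((q' : ℚ) : ℝ) < (m : ℝ) / n := by
    rw [hqr', div_lt_div_iff₀ (by positivity) (by exact_mod_cast hn)]
    have h2 : ((M * m) * n : ℕ) < m * (M * n + 1) := by
      have e : m * (M * n + 1) = (M * m) * n + m := by ring
      omega
    exact_mod_cast Nat.cast_lt.mpr h2
  -- kap agreement
  have hkag : ∀ j, 1 ≤ j → j ≤ 1 + (R + 1) → kap ((q' : ℚ) : ℝ) j = kap ((m : ℝ) / n) j := by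
    intro j h1 h2
    rw [hqr']
    exact kap_agree M m n hm (by omega) j h1 (by omega)
  have hgeq : gBody (kap ((q' : ℚ) : ℝ)) 1 (R + 1) = gBody (kap ((m : ℝ) / n)) 1 (R + 1) :=
    gBody_congr 1 (R + 1) (fun i hi1 hi2 => hkag i hi1 (by omega))
  -- perSeq evaluation
  have hword : ∀ i, i ≤ R →
      perSeq (cqWord ((q' : ℚ) : ℝ) q'.num.toNat ++ [0]) i = tailSeq ((m : ℝ) / n) 1 i := by
    intro i hi
    rw [hnumnat]
    have hlb := gBody_length_ge (kap ((q' : ℚ) : ℝ)) 1 (M * m - 1)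
    have hMm : R + 4 ≤ M * m := le_trans hM4 (Nat.le_mul_of_pos_right _ hm)
    have hWlen : (cqWord ((q' : ℚ) : ℝ) (M * m) ++ [0]).length
        = (gBody (kap ((q' : ℚ) : ℝ)) 1 (M * m - 1)).length + 2 := by
      rw [cqWord, tailBody_eq]
      simp
    show (cqWord ((q' : ℚ) : ℝ) (M * m) ++ [0]).getD
        (i % (cqWord ((q' : ℚ) : ℝ) (M * m) ++ [0]).length) 0 = _
    rw [Nat.mod_eq_of_lt (by rw [hWlen]; omega), cqWord, tailBody_eq, List.append_assoc,
      List.getD_append _ _ _ _ (by omega)]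
    have hpre2 : gBody (kap ((q' : ℚ) : ℝ)) 1 (R + 1) <+: gBody (kap ((q' : ℚ) : ℝ)) 1 (M * m - 1) :=
      gBody_prefix _ _ (by omega)
    have hlens := gBody_length_ge (kap ((q' : ℚ) : ℝ)) 1 (R + 1)
    rw [getD_prefix hpre2 (by omega), hgeq]
    have hlens2 := gBody_length_ge (kap ((m : ℝ) / n)) 1 (R + 1)
    exact (tailSeq_eval _ (by omega)).symm
  -- membership in the height set
  have humLT : umLT (perSeq (cqWord ((q' : ℚ) : ℝ) q'.num.toNat ++ [0])) α := by
    refine ⟨R, fun i hi => ?_, ?_, ?_⟩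
    · rw [hword i (le_of_lt hi), ← hαT i (by omega)]
    · rw [hword R le_rfl]
      exact hR.symm
    · have : ∑ i ∈ Finset.range (R + 1),
          ((perSeq (cqWord ((q' : ℚ) : ℝ) q'.num.toNat ++ [0]) i : ℕ))
          = ∑ i ∈ Finset.range (R + 1), ((tailSeq ((m : ℝ) / n) 1 i : ℕ)) :=
        Finset.sum_congr rfl (fun i hi => by
          rw [hword i (by rw [Finset.mem_range] at hi; omega)])
      rw [this]
      exact hTeven
  have hmem : ((q' : ℚ) : ℝ) ∈ ({x : ℝ | ∃ qq : ℚ, x = (qq : ℝ) ∧ 0 < qq ∧ qq ≤ 1 / 2 ∧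
      umLT (perSeq (cqWord (qq : ℝ) qq.num.toNat ++ [0])) α} ∪ {1 / 2} : Set ℝ) :=
    Or.inl ⟨q', rfl, hq'pos, hq'half, humLT⟩
  have hbdd : BddBelow ({x : ℝ | ∃ qq : ℚ, x = (qq : ℝ) ∧ 0 < qq ∧ qq ≤ 1 / 2 ∧
      umLT (perSeq (cqWord (qq : ℝ) qq.num.toNat ++ [0])) α} ∪ {1 / 2} : Set ℝ) := by
    refine ⟨0, ?_⟩
    rintro x (⟨qq, rfl, hqq, -, -⟩ | hx)
    · exact le_of_lt (by exact_mod_cast hqq)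
    · rw [mem_singleton_iff] at hx
      rw [hx]
      norm_num
  have hle : height α ≤ ((q' : ℚ) : ℝ) := csInf_le hbdd hmem
  rw [hheight] at hle
  linarith
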